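/- Let μ > 0 and λ be real constants with λ + 2μ > 0 (so that λ + 3μ > 0), and set c := (λ+μ)/(λ+3μ). Let Ω ⊆ ℝ² be a connected open set that is symmetric with respect to Γ := {x₁ = 0}, i.e. R(Ω) = Ω where R(x₁,x₂) := (−x₁,x₂). Let γ be a nonempty connected component of Ω ∩ Γ. Let u : Ω → ℝ² be real-analytic with 𝓛₀u := μΔu + (λ+μ)∇(div u) = 0 on Ω and u = 0 on γ. Define D̃₀u(x) := (u₁(x), −u₂(x)) + c x₁² Δu(x) + 2c x₁ (∂₂u₂(x), −∂₂u₁(x)). Then D̃₀u itself solves the same boundary value problem: 𝓛₀(D̃₀u) = 0 on Ω and D̃₀u = 0 on γ. -/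

import Mathlib

noncomputable section

open Real

/-- The Euclidean plane. -/
abbrev E2 : Type := EuclideanSpace ℝ (Fin 2)

/-- Partial derivative `∂ᵢf` (with `i = 0` corresponding to `∂₁`). -/
noncomputable def pd (i : Fin 2) (f : E2 → ℝ) (x : E2) : ℝ :=
  fderiv ℝ f x (EuclideanSpace.single i 1)

/-- Laplacian of a scalar function. -/
noncomputable def lap (f : E2 → ℝ) (x : E2) : ℝ :=
  pd 0 (pd 0 f) x + pd 1 (pd 1 f) x

/-- Divergence `div u = ∂₁u₁ + ∂₂u₂`. -/
noncomputable def divg (u : E2 → Fin 2 → ℝ) (x : E2) : ℝ :=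
  pd 0 (fun y => u y 0) x + pd 1 (fun y => u y 1) x

/-- The Lamé operator `𝓛₀u = μΔu + (λ+μ)∇(div u)`, `i`-th component. -/
noncomputable def lame (μ lam : ℝ) (u : E2 → Fin 2 → ℝ) (x : E2) (i : Fin 2) : ℝ :=
  μ * lap (fun y => u y i) x + (lam + μ) * pd i (divg u) x


section AuxLemmas
variable {Ω : Set E2} {f g p q r : E2 → ℝ} {x : E2} {i j k l : Fin 2}

lemma pd_congr_on (hΩ : IsOpen Ω) (h : ∀ y ∈ Ω, f y = g y) (hx : x ∈ Ω) :
    pd i f x = pd i g x := by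
  unfold pd
  have : f =ᶠ[nhds x] g := by
    filter_upwards [hΩ.mem_nhds hx] with y hy using h y hy
  rw [this.fderiv_eq]

lemma analyticOnNhd_pd (hf : AnalyticOnNhd ℝ f Ω) (hΩ : IsOpen Ω) :
    AnalyticOnNhd ℝ (pd i f) Ω := by
  intro y hy
  exact ((ContinuousLinearMap.apply ℝ ℝ ((EuclideanSpace.single i 1 : E2))).analyticAt _).comp
    (hf.fderiv y hy)

lemma pd_add (hf : DifferentiableAt ℝ f x) (hg : DifferentiableAt ℝ g x) :
    pd i (fun y => f y + g y) x = pd i f x + pd i g x := by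
  unfold pd; rw [fderiv_fun_add hf hg]; simp

lemma pd_mul (hf : DifferentiableAt ℝ f x) (hg : DifferentiableAt ℝ g x) :
    pd i (fun y => f y * g y) x = pd i f x * g x + f x * pd i g x := by
  unfold pd; rw [fderiv_fun_mul hf hg]; simp; ring

lemma pd_const_mul (hf : DifferentiableAt ℝ f x) (a : ℝ) :
    pd i (fun y => a * f y) x = a * pd i f x := by
  unfold pd; rw [fderiv_const_mul hf]; simp

lemma pd_neg : pd i (fun y => -(f y)) x = -(pd i f x) := by
  unfold pd; rw [fderiv_fun_neg]; simp

lemma pd_zero : pd i (fun _ : E2 => (0:ℝ)) x = 0 := by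
  unfold pd; rw [fderiv_fun_const]; simp

lemma pd_of_eqOn_zero (hΩ : IsOpen Ω) (h : ∀ y ∈ Ω, f y = 0) (hx : x ∈ Ω) :
    pd i f x = 0 := by
  rw [pd_congr_on hΩ (g := fun _ => (0:ℝ)) h hx]; exact pd_zero

lemma pd_coord : pd i (fun y : E2 => y 0) x = if i = 0 then 1 else 0 := by
  unfold pd
  have h : (fun y : E2 => y 0) = (EuclideanSpace.proj (0 : Fin 2) : E2 →L[ℝ] ℝ) := rfl
  rw [h, ContinuousLinearMap.fderiv]
  simp [EuclideanSpace.single_apply]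
  fin_cases i <;> simp

lemma diff_coord : DifferentiableAt ℝ (fun y : E2 => y 0) x :=
  (EuclideanSpace.proj (0 : Fin 2) : E2 →L[ℝ] ℝ).differentiableAt

lemma pd_sq : pd i (fun y : E2 => (y 0)^2) x = (if i = 0 then (1:ℝ) else 0) * (2 * x 0) := by
  have h : (fun y : E2 => (y 0)^2) = fun y : E2 => y 0 * y 0 := by funext y; ring
  rw [h, pd_mul diff_coord diff_coord, pd_coord]; ring

lemma pd_comm (hf : AnalyticOnNhd ℝ f Ω) (hΩ : IsOpen Ω) (hx : x ∈ Ω) :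
    pd i (pd j f) x = pd j (pd i f) x := by
  have hcd : ContDiffAt ℝ 2 f x := (hf x hx).contDiffAt
  have hsymm : IsSymmSndFDerivAt ℝ f x := hcd.isSymmSndFDerivAt (by norm_num)
  have hder : DifferentiableAt ℝ (fderiv ℝ f) x := (hf.fderiv x hx).differentiableAt
  have key : ∀ v w : E2, fderiv ℝ (fun y => fderiv ℝ f y v) x w
      = fderiv ℝ (fderiv ℝ f) x w v := by
    intro v w
    rw [fderiv_clm_apply hder (differentiableAt_const _)]
    simp
  unfold pd
  rw [key, key]
  exact hsymm _ _

lemma pd_comm1 (hΩ : IsOpen Ω) (hf : AnalyticOnNhd ℝ f Ω) (hx : x ∈ Ω) :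
    pd k (pd j (pd i f)) x = pd k (pd i (pd j f)) x :=
  pd_congr_on hΩ (fun y hy => pd_comm hf hΩ hy) hx

lemma pd_comm2 (hΩ : IsOpen Ω) (hf : AnalyticOnNhd ℝ f Ω) (hx : x ∈ Ω) :
    pd l (pd k (pd j (pd i f))) x = pd l (pd k (pd i (pd j f))) x :=
  pd_congr_on hΩ (fun y hy => pd_comm1 hΩ hf hy) hx

lemma an_add (hf : AnalyticOnNhd ℝ f Ω) (hg : AnalyticOnNhd ℝ g Ω) :
    AnalyticOnNhd ℝ (fun y => f y + g y) Ω := hf.add hg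

lemma an_mul (hf : AnalyticOnNhd ℝ f Ω) (hg : AnalyticOnNhd ℝ g Ω) :
    AnalyticOnNhd ℝ (fun y => f y * g y) Ω := hf.mul hg

lemma an_cmul (hf : AnalyticOnNhd ℝ f Ω) (a : ℝ) :
    AnalyticOnNhd ℝ (fun y => a * f y) Ω := analyticOnNhd_const.mul hf

lemma an_coord : AnalyticOnNhd ℝ (fun y : E2 => y 0) Ω :=
  (EuclideanSpace.proj (0 : Fin 2) : E2 →L[ℝ] ℝ).analyticOnNhd Ω

lemma an_sq : AnalyticOnNhd ℝ (fun y : E2 => (y 0)^2) Ω := by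
  have h : (fun y : E2 => (y 0)^2) = fun y : E2 => y 0 * y 0 := by funext y; ring
  rw [h]; exact an_mul an_coord an_coord

lemma pd_shape (hΩ : IsOpen Ω) (hp : AnalyticOnNhd ℝ p Ω) (hq : AnalyticOnNhd ℝ q Ω)
    (hr : AnalyticOnNhd ℝ r Ω) (hx : x ∈ Ω) (i : Fin 2) :
    pd i (fun y => p y + y 0 * q y + (y 0)^2 * r y) x
      = (pd i p x + (if i = 0 then (1:ℝ) else 0) * q x)
        + x 0 * (pd i q x + 2 * (if i = 0 then (1:ℝ) else 0) * r x)
        + (x 0)^2 * pd i r x := by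
  have dp : DifferentiableAt ℝ p x := (hp x hx).differentiableAt
  have dq : DifferentiableAt ℝ q x := (hq x hx).differentiableAt
  have dr : DifferentiableAt ℝ r x := (hr x hx).differentiableAt
  have dsq : DifferentiableAt ℝ (fun y : E2 => (y 0)^2) x := (an_sq (Ω := Set.univ) x trivial).differentiableAt
  have d2 : DifferentiableAt ℝ (fun y : E2 => y 0 * q y) x := diff_coord.mul dq
  have d3 : DifferentiableAt ℝ (fun y : E2 => (y 0)^2 * r y) x := dsq.mul dr
  have h1 : pd i (fun y => p y + y 0 * q y + (y 0)^2 * r y) x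
      = pd i (fun y => p y + y 0 * q y) x + pd i (fun y => (y 0)^2 * r y) x :=
    pd_add (dp.add d2) d3
  have h2 : pd i (fun y => p y + y 0 * q y) x = pd i p x + pd i (fun y => y 0 * q y) x :=
    pd_add dp d2
  have h3 : pd i (fun y => y 0 * q y) x
      = pd i (fun y : E2 => y 0) x * q x + x 0 * pd i q x := pd_mul diff_coord dq
  have h4 : pd i (fun y => (y 0)^2 * r y) x
      = pd i (fun y : E2 => (y 0)^2) x * r x + (x 0)^2 * pd i r x := pd_mul dsq dr
  rw [h1, h2, h3, h4, pd_coord, pd_sq]; ring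

lemma pd_pd_shape (hΩ : IsOpen Ω) (hp : AnalyticOnNhd ℝ p Ω) (hq : AnalyticOnNhd ℝ q Ω)
    (hr : AnalyticOnNhd ℝ r Ω) (hx : x ∈ Ω) (i j : Fin 2) :
    pd j (pd i (fun y => p y + y 0 * q y + (y 0)^2 * r y)) x
      = (pd j (pd i p) x + (if i = 0 then (1:ℝ) else 0) * pd j q x
          + (if j = 0 then (1:ℝ) else 0) * (pd i q x + 2 * (if i = 0 then (1:ℝ) else 0) * r x))
        + x 0 * (pd j (pd i q) x + 2 * (if i = 0 then (1:ℝ) else 0) * pd j r x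
          + 2 * (if j = 0 then (1:ℝ) else 0) * pd i r x)
        + (x 0)^2 * pd j (pd i r) x := by
  set d : ℝ := if i = 0 then (1:ℝ) else 0 with hd
  have hpq : AnalyticOnNhd ℝ (fun z => pd i p z + d * q z) Ω :=
    an_add (analyticOnNhd_pd hp hΩ) (an_cmul hq d)
  have hq1 : AnalyticOnNhd ℝ (fun z => pd i q z + 2 * d * r z) Ω :=
    an_add (analyticOnNhd_pd hq hΩ) (an_cmul hr (2*d))
  have hr1 : AnalyticOnNhd ℝ (pd i r) Ω := analyticOnNhd_pd hr hΩ
  have h1 : ∀ y ∈ Ω, pd i (fun z => p z + z 0 * q z + (z 0)^2 * r z) y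
      = (fun z => pd i p z + d * q z) y + y 0 * ((fun z => pd i q z + 2 * d * r z) y)
        + (y 0)^2 * (pd i r y) := by
    intro y hy
    have := pd_shape hΩ hp hq hr hy i
    rw [this]
  have h2 : pd j (pd i (fun y => p y + y 0 * q y + (y 0)^2 * r y)) x
      = pd j (fun y => (fun z => pd i p z + d * q z) y
          + y 0 * ((fun z => pd i q z + 2 * d * r z) y) + (y 0)^2 * (pd i r y)) x :=
    pd_congr_on hΩ h1 hx
  rw [h2, pd_shape hΩ hpq hq1 hr1 hx j]
  have e1 : pd j (fun z => pd i p z + d * q z) x = pd j (pd i p) x + d * pd j q x :=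
    (pd_add ((analyticOnNhd_pd hp hΩ x hx).differentiableAt)
      (((hq x hx).differentiableAt).const_mul d)).trans
      (by rw [pd_const_mul ((hq x hx).differentiableAt) d])
  have e2 : pd j (fun z => pd i q z + 2 * d * r z) x
      = pd j (pd i q) x + 2 * d * pd j r x :=
    (pd_add ((analyticOnNhd_pd hq hΩ x hx).differentiableAt)
      (((hr x hx).differentiableAt).const_mul (2*d))).trans
      (by rw [pd_const_mul ((hr x hx).differentiableAt) (2*d)])
  rw [e1, e2]

lemma pd_pd_const_mul (hΩ : IsOpen Ω) (hg : AnalyticOnNhd ℝ g Ω) (hx : x ∈ Ω) (a : ℝ) :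
    pd j (pd i (fun y => a * g y)) x = a * pd j (pd i g) x := by
  have h1 : ∀ y ∈ Ω, pd i (fun z => a * g z) y = a * pd i g y := fun y hy =>
    pd_const_mul ((hg y hy).differentiableAt) a
  rw [pd_congr_on hΩ h1 hx]
  exact pd_const_mul ((analyticOnNhd_pd hg hΩ x hx).differentiableAt) a

lemma pd_const_mul_add (hΩ : IsOpen Ω) (hg : AnalyticOnNhd ℝ g Ω) (hf : AnalyticOnNhd ℝ f Ω)
    (hx : x ∈ Ω) (a : ℝ) :
    pd i (fun y => a * (g y + f y)) x = a * (pd i g x + pd i f x) := by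
  have d1 : DifferentiableAt ℝ g x := (hg x hx).differentiableAt
  have d2 : DifferentiableAt ℝ f x := (hf x hx).differentiableAt
  rw [pd_const_mul (d1.fun_add d2) a, pd_add d1 d2]

lemma pd_pd_const_mul_add (hΩ : IsOpen Ω) (hg : AnalyticOnNhd ℝ g Ω) (hf : AnalyticOnNhd ℝ f Ω)
    (hx : x ∈ Ω) (a : ℝ) :
    pd j (pd i (fun y => a * (g y + f y))) x = a * (pd j (pd i g) x + pd j (pd i f) x) := by
  have h1 : ∀ y ∈ Ω, pd i (fun z => a * (g z + f z)) y
      = a * ((pd i g) y + (pd i f) y) := fun y hy => pd_const_mul_add hΩ hg hf hy a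
  rw [pd_congr_on hΩ h1 hx]
  exact pd_const_mul_add hΩ (analyticOnNhd_pd hg hΩ) (analyticOnNhd_pd hf hΩ) hx a

lemma pd_comb (hΩ : IsOpen Ω) {A B C D : E2 → ℝ} (hA : AnalyticOnNhd ℝ A Ω)
    (hB : AnalyticOnNhd ℝ B Ω) (hC : AnalyticOnNhd ℝ C Ω) (hD : AnalyticOnNhd ℝ D Ω)
    (hx : x ∈ Ω) (k1 k2 : ℝ) :
    pd i (fun y => k1 * (A y + B y) + k2 * (C y + D y)) x
      = k1 * (pd i A x + pd i B x) + k2 * (pd i C x + pd i D x) := by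
  have dA := (hA x hx).differentiableAt
  have dB := (hB x hx).differentiableAt
  have dC := (hC x hx).differentiableAt
  have dD := (hD x hx).differentiableAt
  rw [pd_add ((dA.fun_add dB).const_mul k1) ((dC.fun_add dD).const_mul k2),
    pd_const_mul (dA.fun_add dB) k1, pd_const_mul (dC.fun_add dD) k2, pd_add dA dB, pd_add dC dD]

end AuxLemmas

/-- If `u` is real-analytic on a connected open set `Ω` symmetric about `Γ = {x₁ = 0}`,
solves `𝓛₀u = 0` on `Ω` and vanishes on a connected component `γ` of `Ω ∩ Γ`, then
`D̃₀u(x) = (u₁(x), −u₂(x)) + c x₁² Δu(x) + 2c x₁ (∂₂u₂(x), −∂₂u₁(x))` solves the same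
boundary value problem: `𝓛₀(D̃₀u) = 0` on `Ω` and `D̃₀u = 0` on `γ`. -/
theorem lame_reflection_same_bvp
    (μ lam c : ℝ) (hμ : 0 < μ) (hlam : 0 < lam + 2 * μ)
    (hc : c = (lam + μ) / (lam + 3 * μ))
    (R : E2 → E2) (hR : ∀ x : E2, R x 0 = -(x 0) ∧ R x 1 = x 1)
    (Ω : Set E2) (hΩ : IsOpen Ω) (hconn : IsConnected Ω)
    (hsymm : R '' Ω = Ω)
    (γ : Set E2)
    (hγ : ∃ p ∈ Ω ∩ {x : E2 | x 0 = 0},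
      γ = connectedComponentIn (Ω ∩ {x : E2 | x 0 = 0}) p)
    (u : E2 → Fin 2 → ℝ) (hu : AnalyticOnNhd ℝ u Ω)
    (hlame : ∀ x ∈ Ω, ∀ i : Fin 2, lame μ lam u x i = 0)
    (hbc : ∀ x ∈ γ, ∀ i : Fin 2, u x i = 0)
    (Dt : E2 → Fin 2 → ℝ)
    (hDt0 : ∀ x : E2,
      Dt x 0 = u x 0 + c * (x 0) ^ 2 * lap (fun y => u y 0) x
        + 2 * c * x 0 * pd 1 (fun y => u y 1) x)
    (hDt1 : ∀ x : E2,
      Dt x 1 = -(u x 1) + c * (x 0) ^ 2 * lap (fun y => u y 1) x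
        - 2 * c * x 0 * pd 1 (fun y => u y 0) x) :
    (∀ x ∈ Ω, ∀ i : Fin 2, lame μ lam Dt x i = 0) ∧
      (∀ x ∈ γ, ∀ i : Fin 2, Dt x i = 0) := by
  have h3μ : lam + 3 * μ ≠ 0 := by nlinarith
  have hcc : c * (lam + 3 * μ) = lam + μ := by rw [hc]; exact div_mul_cancel₀ _ h3μ
  have hPd : ∀ {f : E2 → ℝ}, AnalyticOnNhd ℝ f Ω → ∀ i : Fin 2, AnalyticOnNhd ℝ (pd i f) Ω :=
    fun hf _ => analyticOnNhd_pd hf hΩ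
  have hU0a : AnalyticOnNhd ℝ (fun y => u y 0) Ω := fun y hy =>
    (((ContinuousLinearMap.proj (R := ℝ) (φ := fun _ : Fin 2 => ℝ) 0)).analyticAt (u y)).comp (hu y hy)
  have hU1a : AnalyticOnNhd ℝ (fun y => u y 1) Ω := fun y hy =>
    (((ContinuousLinearMap.proj (R := ℝ) (φ := fun _ : Fin 2 => ℝ) 1)).analyticAt (u y)).comp (hu y hy)
  refine ⟨?_, ?_⟩
  · intro x hx i
    have hq0a : AnalyticOnNhd ℝ (fun y => 2 * c * pd 1 (fun y => u y 1) y) Ω := an_cmul (hPd hU1a 1) (2 * c)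
    have hr0a : AnalyticOnNhd ℝ (fun y => c * (pd 0 (pd 0 (fun y => u y 0)) y + pd 1 (pd 1 (fun y => u y 0)) y)) Ω := an_cmul (an_add (hPd (hPd hU0a 0) 0) (hPd (hPd hU0a 1) 1)) c
    have hp1a : AnalyticOnNhd ℝ (fun y => -1 * u y 1) Ω := an_cmul hU1a (-1)
    have hq1a : AnalyticOnNhd ℝ (fun y => -(2 * c) * pd 1 (fun y => u y 0) y) Ω := an_cmul (hPd hU0a 1) (-(2 * c))
    have hr1a : AnalyticOnNhd ℝ (fun y => c * (pd 0 (pd 0 (fun y => u y 1)) y + pd 1 (pd 1 (fun y => u y 1)) y)) Ω := an_cmul (an_add (hPd (hPd hU1a 0) 0) (hPd (hPd hU1a 1) 1)) c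
    have hSH0a : AnalyticOnNhd ℝ (fun y => u y 0 + y 0 * (2 * c * pd 1 (fun y => u y 1) y) + (y 0) ^ 2 * (c * (pd 0 (pd 0 (fun y => u y 0)) y + pd 1 (pd 1 (fun y => u y 0)) y))) Ω := an_add (an_add hU0a (an_mul an_coord hq0a)) (an_mul an_sq hr0a)
    have hSH1a : AnalyticOnNhd ℝ (fun y => -1 * u y 1 + y 0 * (-(2 * c) * pd 1 (fun y => u y 0) y) + (y 0) ^ 2 * (c * (pd 0 (pd 0 (fun y => u y 1)) y + pd 1 (pd 1 (fun y => u y 1)) y))) Ω := an_add (an_add hp1a (an_mul an_coord hq1a)) (an_mul an_sq hr1a)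
    have hDtf0 : (fun y => Dt y 0) = (fun y => u y 0 + y 0 * (2 * c * pd 1 (fun y => u y 1) y) + (y 0) ^ 2 * (c * (pd 0 (pd 0 (fun y => u y 0)) y + pd 1 (pd 1 (fun y => u y 0)) y))) := by
      funext y; rw [hDt0 y]; unfold lap; ring
    have hDtf1 : (fun y => Dt y 1) = (fun y => -1 * u y 1 + y 0 * (-(2 * c) * pd 1 (fun y => u y 0) y) + (y 0) ^ 2 * (c * (pd 0 (pd 0 (fun y => u y 1)) y + pd 1 (pd 1 (fun y => u y 1)) y))) := by
      funext y; rw [hDt1 y]; unfold lap; ring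
    have hE0y : ∀ y ∈ Ω, μ * ((pd 0 (pd 0 (fun y => u y 0))) y + (pd 1 (pd 1 (fun y => u y 0))) y) + (lam + μ) * ((pd 0 (pd 0 (fun y => u y 0))) y + (pd 0 (pd 1 (fun y => u y 1))) y) = 0 := by
      intro y hy
      have h : μ * (pd 0 (pd 0 (fun y => u y 0)) y + pd 1 (pd 1 (fun y => u y 0)) y) + (lam + μ) * pd 0 (fun z => pd 0 (fun y => u y 0) z + pd 1 (fun y => u y 1) z) y = 0 := hlame y hy 0
      rw [pd_add (((hPd hU0a 0) y hy).differentiableAt) (((hPd hU1a 1) y hy).differentiableAt)] at h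
      exact h
    have hE1y : ∀ y ∈ Ω, μ * ((pd 0 (pd 0 (fun y => u y 1))) y + (pd 1 (pd 1 (fun y => u y 1))) y) + (lam + μ) * ((pd 0 (pd 1 (fun y => u y 0))) y + (pd 1 (pd 1 (fun y => u y 1))) y) = 0 := by
      intro y hy
      have h : μ * (pd 0 (pd 0 (fun y => u y 1)) y + pd 1 (pd 1 (fun y => u y 1)) y) + (lam + μ) * pd 1 (fun z => pd 0 (fun y => u y 0) z + pd 1 (fun y => u y 1) z) y = 0 := hlame y hy 1
      rw [pd_add (((hPd hU0a 0) y hy).differentiableAt) (((hPd hU1a 1) y hy).differentiableAt)] at h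
      rw [show pd 1 (pd 0 (fun y => u y 0)) y = pd 0 (pd 1 (fun y => u y 0)) y from pd_comm hU0a hΩ hy] at h
      exact h
    have hd0E0y : ∀ y ∈ Ω, μ * ((pd 0 (pd 0 (pd 0 (fun y => u y 0)))) y + (pd 0 (pd 1 (pd 1 (fun y => u y 0)))) y) + (lam + μ) * ((pd 0 (pd 0 (pd 0 (fun y => u y 0)))) y + (pd 0 (pd 0 (pd 1 (fun y => u y 1)))) y) = 0 := by
      intro y hy
      have h0 : pd 0 (fun z => μ * ((pd 0 (pd 0 (fun y => u y 0))) z + (pd 1 (pd 1 (fun y => u y 0))) z) + (lam + μ) * ((pd 0 (pd 0 (fun y => u y 0))) z + (pd 0 (pd 1 (fun y => u y 1))) z)) y = 0 := pd_of_eqOn_zero hΩ hE0y hy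
      rw [pd_comb hΩ (hPd (hPd hU0a 0) 0) (hPd (hPd hU0a 1) 1) (hPd (hPd hU0a 0) 0) (hPd (hPd hU1a 1) 0) hy μ (lam + μ)] at h0
      exact h0
    have hd1E0y : ∀ y ∈ Ω, μ * ((pd 1 (pd 0 (pd 0 (fun y => u y 0)))) y + (pd 1 (pd 1 (pd 1 (fun y => u y 0)))) y) + (lam + μ) * ((pd 1 (pd 0 (pd 0 (fun y => u y 0)))) y + (pd 1 (pd 0 (pd 1 (fun y => u y 1)))) y) = 0 := by
      intro y hy
      have h0 : pd 1 (fun z => μ * ((pd 0 (pd 0 (fun y => u y 0))) z + (pd 1 (pd 1 (fun y => u y 0))) z) + (lam + μ) * ((pd 0 (pd 0 (fun y => u y 0))) z + (pd 0 (pd 1 (fun y => u y 1))) z)) y = 0 := pd_of_eqOn_zero hΩ hE0y hy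
      rw [pd_comb hΩ (hPd (hPd hU0a 0) 0) (hPd (hPd hU0a 1) 1) (hPd (hPd hU0a 0) 0) (hPd (hPd hU1a 1) 0) hy μ (lam + μ)] at h0
      exact h0
    have hd0E1y : ∀ y ∈ Ω, μ * ((pd 0 (pd 0 (pd 0 (fun y => u y 1)))) y + (pd 0 (pd 1 (pd 1 (fun y => u y 1)))) y) + (lam + μ) * ((pd 0 (pd 0 (pd 1 (fun y => u y 0)))) y + (pd 0 (pd 1 (pd 1 (fun y => u y 1)))) y) = 0 := by
      intro y hy
      have h0 : pd 0 (fun z => μ * ((pd 0 (pd 0 (fun y => u y 1))) z + (pd 1 (pd 1 (fun y => u y 1))) z) + (lam + μ) * ((pd 0 (pd 1 (fun y => u y 0))) z + (pd 1 (pd 1 (fun y => u y 1))) z)) y = 0 := pd_of_eqOn_zero hΩ hE1y hy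
      rw [pd_comb hΩ (hPd (hPd hU1a 0) 0) (hPd (hPd hU1a 1) 1) (hPd (hPd hU0a 1) 0) (hPd (hPd hU1a 1) 1) hy μ (lam + μ)] at h0
      exact h0
    have hd1E1y : ∀ y ∈ Ω, μ * ((pd 1 (pd 0 (pd 0 (fun y => u y 1)))) y + (pd 1 (pd 1 (pd 1 (fun y => u y 1)))) y) + (lam + μ) * ((pd 1 (pd 0 (pd 1 (fun y => u y 0)))) y + (pd 1 (pd 1 (pd 1 (fun y => u y 1)))) y) = 0 := by
      intro y hy
      have h0 : pd 1 (fun z => μ * ((pd 0 (pd 0 (fun y => u y 1))) z + (pd 1 (pd 1 (fun y => u y 1))) z) + (lam + μ) * ((pd 0 (pd 1 (fun y => u y 0))) z + (pd 1 (pd 1 (fun y => u y 1))) z)) y = 0 := pd_of_eqOn_zero hΩ hE1y hy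
      rw [pd_comb hΩ (hPd (hPd hU1a 0) 0) (hPd (hPd hU1a 1) 1) (hPd (hPd hU0a 1) 0) (hPd (hPd hU1a 1) 1) hy μ (lam + μ)] at h0
      exact h0
    have hdd00E0 : μ * ((pd 0 (pd 0 (pd 0 (pd 0 (fun y => u y 0))))) x + (pd 0 (pd 0 (pd 1 (pd 1 (fun y => u y 0))))) x) + (lam + μ) * ((pd 0 (pd 0 (pd 0 (pd 0 (fun y => u y 0))))) x + (pd 0 (pd 0 (pd 0 (pd 1 (fun y => u y 1))))) x) = 0 := by
      have h0 : pd 0 (fun z => μ * ((pd 0 (pd 0 (pd 0 (fun y => u y 0)))) z + (pd 0 (pd 1 (pd 1 (fun y => u y 0)))) z) + (lam + μ) * ((pd 0 (pd 0 (pd 0 (fun y => u y 0)))) z + (pd 0 (pd 0 (pd 1 (fun y => u y 1)))) z)) x = 0 := pd_of_eqOn_zero hΩ hd0E0y hx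
      rw [pd_comb hΩ (hPd (hPd (hPd hU0a 0) 0) 0) (hPd (hPd (hPd hU0a 1) 1) 0) (hPd (hPd (hPd hU0a 0) 0) 0) (hPd (hPd (hPd hU1a 1) 0) 0) hx μ (lam + μ)] at h0
      exact h0
    have hdd11E0 : μ * ((pd 1 (pd 1 (pd 0 (pd 0 (fun y => u y 0))))) x + (pd 1 (pd 1 (pd 1 (pd 1 (fun y => u y 0))))) x) + (lam + μ) * ((pd 1 (pd 1 (pd 0 (pd 0 (fun y => u y 0))))) x + (pd 1 (pd 1 (pd 0 (pd 1 (fun y => u y 1))))) x) = 0 := by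
      have h0 : pd 1 (fun z => μ * ((pd 1 (pd 0 (pd 0 (fun y => u y 0)))) z + (pd 1 (pd 1 (pd 1 (fun y => u y 0)))) z) + (lam + μ) * ((pd 1 (pd 0 (pd 0 (fun y => u y 0)))) z + (pd 1 (pd 0 (pd 1 (fun y => u y 1)))) z)) x = 0 := pd_of_eqOn_zero hΩ hd1E0y hx
      rw [pd_comb hΩ (hPd (hPd (hPd hU0a 0) 0) 1) (hPd (hPd (hPd hU0a 1) 1) 1) (hPd (hPd (hPd hU0a 0) 0) 1) (hPd (hPd (hPd hU1a 1) 0) 1) hx μ (lam + μ)] at h0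
      exact h0
    have hdd00E1 : μ * ((pd 0 (pd 0 (pd 0 (pd 0 (fun y => u y 1))))) x + (pd 0 (pd 0 (pd 1 (pd 1 (fun y => u y 1))))) x) + (lam + μ) * ((pd 0 (pd 0 (pd 0 (pd 1 (fun y => u y 0))))) x + (pd 0 (pd 0 (pd 1 (pd 1 (fun y => u y 1))))) x) = 0 := by
      have h0 : pd 0 (fun z => μ * ((pd 0 (pd 0 (pd 0 (fun y => u y 1)))) z + (pd 0 (pd 1 (pd 1 (fun y => u y 1)))) z) + (lam + μ) * ((pd 0 (pd 0 (pd 1 (fun y => u y 0)))) z + (pd 0 (pd 1 (pd 1 (fun y => u y 1)))) z)) x = 0 := pd_of_eqOn_zero hΩ hd0E1y hx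
      rw [pd_comb hΩ (hPd (hPd (hPd hU1a 0) 0) 0) (hPd (hPd (hPd hU1a 1) 1) 0) (hPd (hPd (hPd hU0a 1) 0) 0) (hPd (hPd (hPd hU1a 1) 1) 0) hx μ (lam + μ)] at h0
      exact h0
    have hdd11E1 : μ * ((pd 1 (pd 1 (pd 0 (pd 0 (fun y => u y 1))))) x + (pd 1 (pd 1 (pd 1 (pd 1 (fun y => u y 1))))) x) + (lam + μ) * ((pd 1 (pd 1 (pd 0 (pd 1 (fun y => u y 0))))) x + (pd 1 (pd 1 (pd 1 (pd 1 (fun y => u y 1))))) x) = 0 := by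
      have h0 : pd 1 (fun z => μ * ((pd 1 (pd 0 (pd 0 (fun y => u y 1)))) z + (pd 1 (pd 1 (pd 1 (fun y => u y 1)))) z) + (lam + μ) * ((pd 1 (pd 0 (pd 1 (fun y => u y 0)))) z + (pd 1 (pd 1 (pd 1 (fun y => u y 1)))) z)) x = 0 := pd_of_eqOn_zero hΩ hd1E1y hx
      rw [pd_comb hΩ (hPd (hPd (hPd hU1a 0) 0) 1) (hPd (hPd (hPd hU1a 1) 1) 1) (hPd (hPd (hPd hU0a 1) 0) 1) (hPd (hPd (hPd hU1a 1) 1) 1) hx μ (lam + μ)] at h0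
      exact h0
    have hsym0_10 : (pd 1 (pd 0 (fun y => u y 0))) x = (pd 0 (pd 1 (fun y => u y 0))) x := pd_comm hU0a hΩ hx
    have hsym0_010 : (pd 0 (pd 1 (pd 0 (fun y => u y 0)))) x = (pd 0 (pd 0 (pd 1 (fun y => u y 0)))) x := pd_comm1 hΩ hU0a hx
    have hsym0_100 : (pd 1 (pd 0 (pd 0 (fun y => u y 0)))) x = (pd 0 (pd 0 (pd 1 (fun y => u y 0)))) x := by
      calc (pd 1 (pd 0 (pd 0 (fun y => u y 0)))) x = (pd 0 (pd 1 (pd 0 (fun y => u y 0)))) x := pd_comm (hPd hU0a 0) hΩ hx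
        _ = (pd 0 (pd 0 (pd 1 (fun y => u y 0)))) x := pd_comm1 hΩ hU0a hx
    have hsym0_101 : (pd 1 (pd 0 (pd 1 (fun y => u y 0)))) x = (pd 0 (pd 1 (pd 1 (fun y => u y 0)))) x := pd_comm (hPd hU0a 1) hΩ hx
    have hsym0_110 : (pd 1 (pd 1 (pd 0 (fun y => u y 0)))) x = (pd 0 (pd 1 (pd 1 (fun y => u y 0)))) x := by
      calc (pd 1 (pd 1 (pd 0 (fun y => u y 0)))) x = (pd 1 (pd 0 (pd 1 (fun y => u y 0)))) x := pd_comm1 hΩ hU0a hx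
        _ = (pd 0 (pd 1 (pd 1 (fun y => u y 0)))) x := pd_comm (hPd hU0a 1) hΩ hx
    have hsym0_0010 : (pd 0 (pd 0 (pd 1 (pd 0 (fun y => u y 0))))) x = (pd 0 (pd 0 (pd 0 (pd 1 (fun y => u y 0))))) x := pd_comm2 hΩ hU0a hx
    have hsym0_0100 : (pd 0 (pd 1 (pd 0 (pd 0 (fun y => u y 0))))) x = (pd 0 (pd 0 (pd 0 (pd 1 (fun y => u y 0))))) x := by
      calc (pd 0 (pd 1 (pd 0 (pd 0 (fun y => u y 0))))) x = (pd 0 (pd 0 (pd 1 (pd 0 (fun y => u y 0))))) x := pd_comm1 hΩ (hPd hU0a 0) hx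
        _ = (pd 0 (pd 0 (pd 0 (pd 1 (fun y => u y 0))))) x := pd_comm2 hΩ hU0a hx
    have hsym0_0101 : (pd 0 (pd 1 (pd 0 (pd 1 (fun y => u y 0))))) x = (pd 0 (pd 0 (pd 1 (pd 1 (fun y => u y 0))))) x := pd_comm1 hΩ (hPd hU0a 1) hx
    have hsym0_0110 : (pd 0 (pd 1 (pd 1 (pd 0 (fun y => u y 0))))) x = (pd 0 (pd 0 (pd 1 (pd 1 (fun y => u y 0))))) x := by
      calc (pd 0 (pd 1 (pd 1 (pd 0 (fun y => u y 0))))) x = (pd 0 (pd 1 (pd 0 (pd 1 (fun y => u y 0))))) x := pd_comm2 hΩ hU0a hx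
        _ = (pd 0 (pd 0 (pd 1 (pd 1 (fun y => u y 0))))) x := pd_comm1 hΩ (hPd hU0a 1) hx
    have hsym0_1000 : (pd 1 (pd 0 (pd 0 (pd 0 (fun y => u y 0))))) x = (pd 0 (pd 0 (pd 0 (pd 1 (fun y => u y 0))))) x := by
      calc (pd 1 (pd 0 (pd 0 (pd 0 (fun y => u y 0))))) x = (pd 0 (pd 1 (pd 0 (pd 0 (fun y => u y 0))))) x := pd_comm (hPd (hPd hU0a 0) 0) hΩ hx
        _ = (pd 0 (pd 0 (pd 1 (pd 0 (fun y => u y 0))))) x := pd_comm1 hΩ (hPd hU0a 0) hx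
        _ = (pd 0 (pd 0 (pd 0 (pd 1 (fun y => u y 0))))) x := pd_comm2 hΩ hU0a hx
    have hsym0_1001 : (pd 1 (pd 0 (pd 0 (pd 1 (fun y => u y 0))))) x = (pd 0 (pd 0 (pd 1 (pd 1 (fun y => u y 0))))) x := by
      calc (pd 1 (pd 0 (pd 0 (pd 1 (fun y => u y 0))))) x = (pd 0 (pd 1 (pd 0 (pd 1 (fun y => u y 0))))) x := pd_comm (hPd (hPd hU0a 1) 0) hΩ hx
        _ = (pd 0 (pd 0 (pd 1 (pd 1 (fun y => u y 0))))) x := pd_comm1 hΩ (hPd hU0a 1) hx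
    have hsym0_1010 : (pd 1 (pd 0 (pd 1 (pd 0 (fun y => u y 0))))) x = (pd 0 (pd 0 (pd 1 (pd 1 (fun y => u y 0))))) x := by
      calc (pd 1 (pd 0 (pd 1 (pd 0 (fun y => u y 0))))) x = (pd 0 (pd 1 (pd 1 (pd 0 (fun y => u y 0))))) x := pd_comm (hPd (hPd hU0a 0) 1) hΩ hx
        _ = (pd 0 (pd 1 (pd 0 (pd 1 (fun y => u y 0))))) x := pd_comm2 hΩ hU0a hx
        _ = (pd 0 (pd 0 (pd 1 (pd 1 (fun y => u y 0))))) x := pd_comm1 hΩ (hPd hU0a 1) hx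
    have hsym0_1011 : (pd 1 (pd 0 (pd 1 (pd 1 (fun y => u y 0))))) x = (pd 0 (pd 1 (pd 1 (pd 1 (fun y => u y 0))))) x := pd_comm (hPd (hPd hU0a 1) 1) hΩ hx
    have hsym0_1100 : (pd 1 (pd 1 (pd 0 (pd 0 (fun y => u y 0))))) x = (pd 0 (pd 0 (pd 1 (pd 1 (fun y => u y 0))))) x := by
      calc (pd 1 (pd 1 (pd 0 (pd 0 (fun y => u y 0))))) x = (pd 1 (pd 0 (pd 1 (pd 0 (fun y => u y 0))))) x := pd_comm1 hΩ (hPd hU0a 0) hx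
        _ = (pd 0 (pd 1 (pd 1 (pd 0 (fun y => u y 0))))) x := pd_comm (hPd (hPd hU0a 0) 1) hΩ hx
        _ = (pd 0 (pd 1 (pd 0 (pd 1 (fun y => u y 0))))) x := pd_comm2 hΩ hU0a hx
        _ = (pd 0 (pd 0 (pd 1 (pd 1 (fun y => u y 0))))) x := pd_comm1 hΩ (hPd hU0a 1) hx
    have hsym0_1101 : (pd 1 (pd 1 (pd 0 (pd 1 (fun y => u y 0))))) x = (pd 0 (pd 1 (pd 1 (pd 1 (fun y => u y 0))))) x := by
      calc (pd 1 (pd 1 (pd 0 (pd 1 (fun y => u y 0))))) x = (pd 1 (pd 0 (pd 1 (pd 1 (fun y => u y 0))))) x := pd_comm1 hΩ (hPd hU0a 1) hx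
        _ = (pd 0 (pd 1 (pd 1 (pd 1 (fun y => u y 0))))) x := pd_comm (hPd (hPd hU0a 1) 1) hΩ hx
    have hsym0_1110 : (pd 1 (pd 1 (pd 1 (pd 0 (fun y => u y 0))))) x = (pd 0 (pd 1 (pd 1 (pd 1 (fun y => u y 0))))) x := by
      calc (pd 1 (pd 1 (pd 1 (pd 0 (fun y => u y 0))))) x = (pd 1 (pd 1 (pd 0 (pd 1 (fun y => u y 0))))) x := pd_comm2 hΩ hU0a hx
        _ = (pd 1 (pd 0 (pd 1 (pd 1 (fun y => u y 0))))) x := pd_comm1 hΩ (hPd hU0a 1) hx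
        _ = (pd 0 (pd 1 (pd 1 (pd 1 (fun y => u y 0))))) x := pd_comm (hPd (hPd hU0a 1) 1) hΩ hx
    have hsym1_10 : (pd 1 (pd 0 (fun y => u y 1))) x = (pd 0 (pd 1 (fun y => u y 1))) x := pd_comm hU1a hΩ hx
    have hsym1_010 : (pd 0 (pd 1 (pd 0 (fun y => u y 1)))) x = (pd 0 (pd 0 (pd 1 (fun y => u y 1)))) x := pd_comm1 hΩ hU1a hx
    have hsym1_100 : (pd 1 (pd 0 (pd 0 (fun y => u y 1)))) x = (pd 0 (pd 0 (pd 1 (fun y => u y 1)))) x := by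
      calc (pd 1 (pd 0 (pd 0 (fun y => u y 1)))) x = (pd 0 (pd 1 (pd 0 (fun y => u y 1)))) x := pd_comm (hPd hU1a 0) hΩ hx
        _ = (pd 0 (pd 0 (pd 1 (fun y => u y 1)))) x := pd_comm1 hΩ hU1a hx
    have hsym1_101 : (pd 1 (pd 0 (pd 1 (fun y => u y 1)))) x = (pd 0 (pd 1 (pd 1 (fun y => u y 1)))) x := pd_comm (hPd hU1a 1) hΩ hx
    have hsym1_110 : (pd 1 (pd 1 (pd 0 (fun y => u y 1)))) x = (pd 0 (pd 1 (pd 1 (fun y => u y 1)))) x := by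
      calc (pd 1 (pd 1 (pd 0 (fun y => u y 1)))) x = (pd 1 (pd 0 (pd 1 (fun y => u y 1)))) x := pd_comm1 hΩ hU1a hx
        _ = (pd 0 (pd 1 (pd 1 (fun y => u y 1)))) x := pd_comm (hPd hU1a 1) hΩ hx
    have hsym1_0010 : (pd 0 (pd 0 (pd 1 (pd 0 (fun y => u y 1))))) x = (pd 0 (pd 0 (pd 0 (pd 1 (fun y => u y 1))))) x := pd_comm2 hΩ hU1a hx
    have hsym1_0100 : (pd 0 (pd 1 (pd 0 (pd 0 (fun y => u y 1))))) x = (pd 0 (pd 0 (pd 0 (pd 1 (fun y => u y 1))))) x := by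
      calc (pd 0 (pd 1 (pd 0 (pd 0 (fun y => u y 1))))) x = (pd 0 (pd 0 (pd 1 (pd 0 (fun y => u y 1))))) x := pd_comm1 hΩ (hPd hU1a 0) hx
        _ = (pd 0 (pd 0 (pd 0 (pd 1 (fun y => u y 1))))) x := pd_comm2 hΩ hU1a hx
    have hsym1_0101 : (pd 0 (pd 1 (pd 0 (pd 1 (fun y => u y 1))))) x = (pd 0 (pd 0 (pd 1 (pd 1 (fun y => u y 1))))) x := pd_comm1 hΩ (hPd hU1a 1) hx
    have hsym1_0110 : (pd 0 (pd 1 (pd 1 (pd 0 (fun y => u y 1))))) x = (pd 0 (pd 0 (pd 1 (pd 1 (fun y => u y 1))))) x := by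
      calc (pd 0 (pd 1 (pd 1 (pd 0 (fun y => u y 1))))) x = (pd 0 (pd 1 (pd 0 (pd 1 (fun y => u y 1))))) x := pd_comm2 hΩ hU1a hx
        _ = (pd 0 (pd 0 (pd 1 (pd 1 (fun y => u y 1))))) x := pd_comm1 hΩ (hPd hU1a 1) hx
    have hsym1_1000 : (pd 1 (pd 0 (pd 0 (pd 0 (fun y => u y 1))))) x = (pd 0 (pd 0 (pd 0 (pd 1 (fun y => u y 1))))) x := by
      calc (pd 1 (pd 0 (pd 0 (pd 0 (fun y => u y 1))))) x = (pd 0 (pd 1 (pd 0 (pd 0 (fun y => u y 1))))) x := pd_comm (hPd (hPd hU1a 0) 0) hΩ hx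
        _ = (pd 0 (pd 0 (pd 1 (pd 0 (fun y => u y 1))))) x := pd_comm1 hΩ (hPd hU1a 0) hx
        _ = (pd 0 (pd 0 (pd 0 (pd 1 (fun y => u y 1))))) x := pd_comm2 hΩ hU1a hx
    have hsym1_1001 : (pd 1 (pd 0 (pd 0 (pd 1 (fun y => u y 1))))) x = (pd 0 (pd 0 (pd 1 (pd 1 (fun y => u y 1))))) x := by
      calc (pd 1 (pd 0 (pd 0 (pd 1 (fun y => u y 1))))) x = (pd 0 (pd 1 (pd 0 (pd 1 (fun y => u y 1))))) x := pd_comm (hPd (hPd hU1a 1) 0) hΩ hx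
        _ = (pd 0 (pd 0 (pd 1 (pd 1 (fun y => u y 1))))) x := pd_comm1 hΩ (hPd hU1a 1) hx
    have hsym1_1010 : (pd 1 (pd 0 (pd 1 (pd 0 (fun y => u y 1))))) x = (pd 0 (pd 0 (pd 1 (pd 1 (fun y => u y 1))))) x := by
      calc (pd 1 (pd 0 (pd 1 (pd 0 (fun y => u y 1))))) x = (pd 0 (pd 1 (pd 1 (pd 0 (fun y => u y 1))))) x := pd_comm (hPd (hPd hU1a 0) 1) hΩ hx
        _ = (pd 0 (pd 1 (pd 0 (pd 1 (fun y => u y 1))))) x := pd_comm2 hΩ hU1a hx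
        _ = (pd 0 (pd 0 (pd 1 (pd 1 (fun y => u y 1))))) x := pd_comm1 hΩ (hPd hU1a 1) hx
    have hsym1_1011 : (pd 1 (pd 0 (pd 1 (pd 1 (fun y => u y 1))))) x = (pd 0 (pd 1 (pd 1 (pd 1 (fun y => u y 1))))) x := pd_comm (hPd (hPd hU1a 1) 1) hΩ hx
    have hsym1_1100 : (pd 1 (pd 1 (pd 0 (pd 0 (fun y => u y 1))))) x = (pd 0 (pd 0 (pd 1 (pd 1 (fun y => u y 1))))) x := by
      calc (pd 1 (pd 1 (pd 0 (pd 0 (fun y => u y 1))))) x = (pd 1 (pd 0 (pd 1 (pd 0 (fun y => u y 1))))) x := pd_comm1 hΩ (hPd hU1a 0) hx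
        _ = (pd 0 (pd 1 (pd 1 (pd 0 (fun y => u y 1))))) x := pd_comm (hPd (hPd hU1a 0) 1) hΩ hx
        _ = (pd 0 (pd 1 (pd 0 (pd 1 (fun y => u y 1))))) x := pd_comm2 hΩ hU1a hx
        _ = (pd 0 (pd 0 (pd 1 (pd 1 (fun y => u y 1))))) x := pd_comm1 hΩ (hPd hU1a 1) hx
    have hsym1_1101 : (pd 1 (pd 1 (pd 0 (pd 1 (fun y => u y 1))))) x = (pd 0 (pd 1 (pd 1 (pd 1 (fun y => u y 1))))) x := by
      calc (pd 1 (pd 1 (pd 0 (pd 1 (fun y => u y 1))))) x = (pd 1 (pd 0 (pd 1 (pd 1 (fun y => u y 1))))) x := pd_comm1 hΩ (hPd hU1a 1) hx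
        _ = (pd 0 (pd 1 (pd 1 (pd 1 (fun y => u y 1))))) x := pd_comm (hPd (hPd hU1a 1) 1) hΩ hx
    have hsym1_1110 : (pd 1 (pd 1 (pd 1 (pd 0 (fun y => u y 1))))) x = (pd 0 (pd 1 (pd 1 (pd 1 (fun y => u y 1))))) x := by
      calc (pd 1 (pd 1 (pd 1 (pd 0 (fun y => u y 1))))) x = (pd 1 (pd 1 (pd 0 (pd 1 (fun y => u y 1))))) x := pd_comm2 hΩ hU1a hx
        _ = (pd 1 (pd 0 (pd 1 (pd 1 (fun y => u y 1))))) x := pd_comm1 hΩ (hPd hU1a 1) hx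
        _ = (pd 0 (pd 1 (pd 1 (pd 1 (fun y => u y 1))))) x := pd_comm (hPd (hPd hU1a 1) 1) hΩ hx
    have hredq0 : ∀ i j : Fin 2, pd j (pd i (fun y => 2 * c * pd 1 (fun y => u y 1) y)) x = 2 * c * pd j (pd i (pd 1 (fun y => u y 1))) x :=
      fun i j => pd_pd_const_mul hΩ (hPd hU1a 1) hx (2 * c)
    have hredq0' : ∀ i : Fin 2, pd i (fun y => 2 * c * pd 1 (fun y => u y 1) y) x = 2 * c * pd i (pd 1 (fun y => u y 1)) x :=
      fun i => pd_const_mul ((hPd hU1a 1 x hx).differentiableAt) (2 * c)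
    have hredr0 : ∀ i j : Fin 2, pd j (pd i (fun y => c * (pd 0 (pd 0 (fun y => u y 0)) y + pd 1 (pd 1 (fun y => u y 0)) y))) x = c * (pd j (pd i (pd 0 (pd 0 (fun y => u y 0)))) x + pd j (pd i (pd 1 (pd 1 (fun y => u y 0)))) x) :=
      fun i j => pd_pd_const_mul_add hΩ (hPd (hPd hU0a 0) 0) (hPd (hPd hU0a 1) 1) hx c
    have hredr0' : ∀ i : Fin 2, pd i (fun y => c * (pd 0 (pd 0 (fun y => u y 0)) y + pd 1 (pd 1 (fun y => u y 0)) y)) x = c * (pd i (pd 0 (pd 0 (fun y => u y 0))) x + pd i (pd 1 (pd 1 (fun y => u y 0))) x) :=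
      fun i => pd_const_mul_add hΩ (hPd (hPd hU0a 0) 0) (hPd (hPd hU0a 1) 1) hx c
    have hredp1 : ∀ i j : Fin 2, pd j (pd i (fun y => -1 * u y 1)) x = -1 * pd j (pd i (fun y => u y 1)) x :=
      fun i j => pd_pd_const_mul hΩ hU1a hx (-1)
    have hredq1 : ∀ i j : Fin 2, pd j (pd i (fun y => -(2 * c) * pd 1 (fun y => u y 0) y)) x = -(2 * c) * pd j (pd i (pd 1 (fun y => u y 0))) x :=
      fun i j => pd_pd_const_mul hΩ (hPd hU0a 1) hx (-(2 * c))
    have hredq1' : ∀ i : Fin 2, pd i (fun y => -(2 * c) * pd 1 (fun y => u y 0) y) x = -(2 * c) * pd i (pd 1 (fun y => u y 0)) x :=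
      fun i => pd_const_mul ((hPd hU0a 1 x hx).differentiableAt) (-(2 * c))
    have hredr1 : ∀ i j : Fin 2, pd j (pd i (fun y => c * (pd 0 (pd 0 (fun y => u y 1)) y + pd 1 (pd 1 (fun y => u y 1)) y))) x = c * (pd j (pd i (pd 0 (pd 0 (fun y => u y 1)))) x + pd j (pd i (pd 1 (pd 1 (fun y => u y 1)))) x) :=
      fun i j => pd_pd_const_mul_add hΩ (hPd (hPd hU1a 0) 0) (hPd (hPd hU1a 1) 1) hx c
    have hredr1' : ∀ i : Fin 2, pd i (fun y => c * (pd 0 (pd 0 (fun y => u y 1)) y + pd 1 (pd 1 (fun y => u y 1)) y)) x = c * (pd i (pd 0 (pd 0 (fun y => u y 1))) x + pd i (pd 1 (pd 1 (fun y => u y 1))) x) :=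
      fun i => pd_const_mul_add hΩ (hPd (hPd hU1a 0) 0) (hPd (hPd hU1a 1) 1) hx c
    have hif1 : ((1 : Fin 2) = 0) = False := by simp
    have hif0 : ((0 : Fin 2) = 0) = True := by simp
    fin_cases i
    · show lame μ lam Dt x 0 = 0
      have hgoal : lame μ lam Dt x 0 = μ * (pd 0 (pd 0 (fun y => Dt y 0)) x + pd 1 (pd 1 (fun y => Dt y 0)) x) + (lam + μ) * pd 0 (fun z => pd 0 (fun y => Dt y 0) z + pd 1 (fun y => Dt y 1) z) x := rfl
      rw [hgoal, hDtf0, hDtf1]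
      rw [show pd 0 (fun z => pd 0 (fun y => u y 0 + y 0 * (2 * c * pd 1 (fun y => u y 1) y) + (y 0) ^ 2 * (c * (pd 0 (pd 0 (fun y => u y 0)) y + pd 1 (pd 1 (fun y => u y 0)) y))) z + pd 1 (fun y => -1 * u y 1 + y 0 * (-(2 * c) * pd 1 (fun y => u y 0) y) + (y 0) ^ 2 * (c * (pd 0 (pd 0 (fun y => u y 1)) y + pd 1 (pd 1 (fun y => u y 1)) y))) z) x = pd 0 (pd 0 (fun y => u y 0 + y 0 * (2 * c * pd 1 (fun y => u y 1) y) + (y 0) ^ 2 * (c * (pd 0 (pd 0 (fun y => u y 0)) y + pd 1 (pd 1 (fun y => u y 0)) y)))) x + pd 0 (pd 1 (fun y => -1 * u y 1 + y 0 * (-(2 * c) * pd 1 (fun y => u y 0) y) + (y 0) ^ 2 * (c * (pd 0 (pd 0 (fun y => u y 1)) y + pd 1 (pd 1 (fun y => u y 1)) y)))) x from pd_add ((hPd hSH0a 0 x hx).differentiableAt) ((hPd hSH1a 1 x hx).differentiableAt)]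
      have hA1 := pd_pd_shape hΩ hU0a hq0a hr0a hx 0 0
      have hA2 := pd_pd_shape hΩ hU0a hq0a hr0a hx 1 1
      have hA3 := pd_pd_shape hΩ hp1a hq1a hr1a hx 1 0
      beta_reduce at hA1 hA2 hA3
      rw [hA1, hA2, hA3]
      simp only [hif0, hif1, if_true, if_false]
      simp only [hredq0, hredq0', hredr0, hredr0', hredp1, hredq1, hredq1', hredr1, hredr1']
      try simp only [hsym0_10, hsym0_010, hsym0_100, hsym0_101, hsym0_110, hsym0_0010, hsym0_0100, hsym0_0101, hsym0_0110, hsym0_1000, hsym0_1001, hsym0_1010, hsym0_1011, hsym0_1100, hsym0_1101, hsym0_1110, hsym1_10, hsym1_010, hsym1_100, hsym1_101, hsym1_110, hsym1_0010, hsym1_0100, hsym1_0101, hsym1_0110, hsym1_1000, hsym1_1001, hsym1_1010, hsym1_1011, hsym1_1100, hsym1_1101, hsym1_1110]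
      have hr1 := hE0y x hx
      have hr2 := hE1y x hx
      have hr3 := hd0E0y x hx
      have hr4 := hd1E0y x hx
      have hr5 := hd0E1y x hx
      have hr6 := hd1E1y x hx
      try simp only [hsym0_10, hsym0_010, hsym0_100, hsym0_101, hsym0_110, hsym0_0010, hsym0_0100, hsym0_0101, hsym0_0110, hsym0_1000, hsym0_1001, hsym0_1010, hsym0_1011, hsym0_1100, hsym0_1101, hsym0_1110, hsym1_10, hsym1_010, hsym1_100, hsym1_101, hsym1_110, hsym1_0010, hsym1_0100, hsym1_0101, hsym1_0110, hsym1_1000, hsym1_1001, hsym1_1010, hsym1_1011, hsym1_1100, hsym1_1101, hsym1_1110] at hr3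
      try simp only [hsym0_10, hsym0_010, hsym0_100, hsym0_101, hsym0_110, hsym0_0010, hsym0_0100, hsym0_0101, hsym0_0110, hsym0_1000, hsym0_1001, hsym0_1010, hsym0_1011, hsym0_1100, hsym0_1101, hsym0_1110, hsym1_10, hsym1_010, hsym1_100, hsym1_101, hsym1_110, hsym1_0010, hsym1_0100, hsym1_0101, hsym1_0110, hsym1_1000, hsym1_1001, hsym1_1010, hsym1_1011, hsym1_1100, hsym1_1101, hsym1_1110] at hr4
      try simp only [hsym0_10, hsym0_010, hsym0_100, hsym0_101, hsym0_110, hsym0_0010, hsym0_0100, hsym0_0101, hsym0_0110, hsym0_1000, hsym0_1001, hsym0_1010, hsym0_1011, hsym0_1100, hsym0_1101, hsym0_1110, hsym1_10, hsym1_010, hsym1_100, hsym1_101, hsym1_110, hsym1_0010, hsym1_0100, hsym1_0101, hsym1_0110, hsym1_1000, hsym1_1001, hsym1_1010, hsym1_1011, hsym1_1100, hsym1_1101, hsym1_1110] at hr5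
      try simp only [hsym0_10, hsym0_010, hsym0_100, hsym0_101, hsym0_110, hsym0_0010, hsym0_0100, hsym0_0101, hsym0_0110, hsym0_1000, hsym0_1001, hsym0_1010, hsym0_1011, hsym0_1100, hsym0_1101, hsym0_1110, hsym1_10, hsym1_010, hsym1_100, hsym1_101, hsym1_110, hsym1_0010, hsym1_0100, hsym1_0101, hsym1_0110, hsym1_1000, hsym1_1001, hsym1_1010, hsym1_1011, hsym1_1100, hsym1_1101, hsym1_1110] at hr6
      try simp only [hsym0_10, hsym0_010, hsym0_100, hsym0_101, hsym0_110, hsym0_0010, hsym0_0100, hsym0_0101, hsym0_0110, hsym0_1000, hsym0_1001, hsym0_1010, hsym0_1011, hsym0_1100, hsym0_1101, hsym0_1110, hsym1_10, hsym1_010, hsym1_100, hsym1_101, hsym1_110, hsym1_0010, hsym1_0100, hsym1_0101, hsym1_0110, hsym1_1000, hsym1_1001, hsym1_1010, hsym1_1011, hsym1_1100, hsym1_1101, hsym1_1110] at hdd00E0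
      try simp only [hsym0_10, hsym0_010, hsym0_100, hsym0_101, hsym0_110, hsym0_0010, hsym0_0100, hsym0_0101, hsym0_0110, hsym0_1000, hsym0_1001, hsym0_1010, hsym0_1011, hsym0_1100, hsym0_1101, hsym0_1110, hsym1_10, hsym1_010, hsym1_100, hsym1_101, hsym1_110, hsym1_0010, hsym1_0100, hsym1_0101, hsym1_0110, hsym1_1000, hsym1_1001, hsym1_1010, hsym1_1011, hsym1_1100, hsym1_1101, hsym1_1110] at hdd11E0
      try simp only [hsym0_10, hsym0_010, hsym0_100, hsym0_101, hsym0_110, hsym0_0010, hsym0_0100, hsym0_0101, hsym0_0110, hsym0_1000, hsym0_1001, hsym0_1010, hsym0_1011, hsym0_1100, hsym0_1101, hsym0_1110, hsym1_10, hsym1_010, hsym1_100, hsym1_101, hsym1_110, hsym1_0010, hsym1_0100, hsym1_0101, hsym1_0110, hsym1_1000, hsym1_1001, hsym1_1010, hsym1_1011, hsym1_1100, hsym1_1101, hsym1_1110] at hdd00E1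
      try simp only [hsym0_10, hsym0_010, hsym0_100, hsym0_101, hsym0_110, hsym0_0010, hsym0_0100, hsym0_0101, hsym0_0110, hsym0_1000, hsym0_1001, hsym0_1010, hsym0_1011, hsym0_1100, hsym0_1101, hsym0_1110, hsym1_10, hsym1_010, hsym1_100, hsym1_101, hsym1_110, hsym1_0010, hsym1_0100, hsym1_0101, hsym1_0110, hsym1_1000, hsym1_1001, hsym1_1010, hsym1_1011, hsym1_1100, hsym1_1101, hsym1_1110] at hdd11E1
      linear_combination (1 + 2 * c) * hr1 + 4 * c * x 0 * hr3 + 2 * c * x 0 * hr6 + c * (x 0) ^ 2 * hdd00E0 + c * (x 0) ^ 2 * hdd11E0 + 2 * pd 0 (pd 1 (fun y => u y 1)) x * hcc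
    · show lame μ lam Dt x 1 = 0
      have hgoal : lame μ lam Dt x 1 = μ * (pd 0 (pd 0 (fun y => Dt y 1)) x + pd 1 (pd 1 (fun y => Dt y 1)) x) + (lam + μ) * pd 1 (fun z => pd 0 (fun y => Dt y 0) z + pd 1 (fun y => Dt y 1) z) x := rfl
      rw [hgoal, hDtf0, hDtf1]
      rw [show pd 1 (fun z => pd 0 (fun y => u y 0 + y 0 * (2 * c * pd 1 (fun y => u y 1) y) + (y 0) ^ 2 * (c * (pd 0 (pd 0 (fun y => u y 0)) y + pd 1 (pd 1 (fun y => u y 0)) y))) z + pd 1 (fun y => -1 * u y 1 + y 0 * (-(2 * c) * pd 1 (fun y => u y 0) y) + (y 0) ^ 2 * (c * (pd 0 (pd 0 (fun y => u y 1)) y + pd 1 (pd 1 (fun y => u y 1)) y))) z) x = pd 1 (pd 0 (fun y => u y 0 + y 0 * (2 * c * pd 1 (fun y => u y 1) y) + (y 0) ^ 2 * (c * (pd 0 (pd 0 (fun y => u y 0)) y + pd 1 (pd 1 (fun y => u y 0)) y)))) x + pd 1 (pd 1 (fun y => -1 * u y 1 + y 0 * (-(2 * c) * pd 1 (fun y =>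 u y 0) y) + (y 0) ^ 2 * (c * (pd 0 (pd 0 (fun y => u y 1)) y + pd 1 (pd 1 (fun y => u y 1)) y)))) x from pd_add ((hPd hSH0a 0 x hx).differentiableAt) ((hPd hSH1a 1 x hx).differentiableAt)]
      have hA1 := pd_pd_shape hΩ hp1a hq1a hr1a hx 0 0
      have hA2 := pd_pd_shape hΩ hp1a hq1a hr1a hx 1 1
      have hA3 := pd_pd_shape hΩ hU0a hq0a hr0a hx 0 1
      beta_reduce at hA1 hA2 hA3
      rw [hA1, hA2, hA3]
      simp only [hif0, hif1, if_true, if_false]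
      simp only [hredq0, hredq0', hredr0, hredr0', hredp1, hredq1, hredq1', hredr1, hredr1']
      try simp only [hsym0_10, hsym0_010, hsym0_100, hsym0_101, hsym0_110, hsym0_0010, hsym0_0100, hsym0_0101, hsym0_0110, hsym0_1000, hsym0_1001, hsym0_1010, hsym0_1011, hsym0_1100, hsym0_1101, hsym0_1110, hsym1_10, hsym1_010, hsym1_100, hsym1_101, hsym1_110, hsym1_0010, hsym1_0100, hsym1_0101, hsym1_0110, hsym1_1000, hsym1_1001, hsym1_1010, hsym1_1011, hsym1_1100, hsym1_1101, hsym1_1110]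
      have hr1 := hE0y x hx
      have hr2 := hE1y x hx
      have hr3 := hd0E0y x hx
      have hr4 := hd1E0y x hx
      have hr5 := hd0E1y x hx
      have hr6 := hd1E1y x hx
      try simp only [hsym0_10, hsym0_010, hsym0_100, hsym0_101, hsym0_110, hsym0_0010, hsym0_0100, hsym0_0101, hsym0_0110, hsym0_1000, hsym0_1001, hsym0_1010, hsym0_1011, hsym0_1100, hsym0_1101, hsym0_1110, hsym1_10, hsym1_010, hsym1_100, hsym1_101, hsym1_110, hsym1_0010, hsym1_0100, hsym1_0101, hsym1_0110, hsym1_1000, hsym1_1001, hsym1_1010, hsym1_1011, hsym1_1100, hsym1_1101, hsym1_1110] at hr3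
      try simp only [hsym0_10, hsym0_010, hsym0_100, hsym0_101, hsym0_110, hsym0_0010, hsym0_0100, hsym0_0101, hsym0_0110, hsym0_1000, hsym0_1001, hsym0_1010, hsym0_1011, hsym0_1100, hsym0_1101, hsym0_1110, hsym1_10, hsym1_010, hsym1_100, hsym1_101, hsym1_110, hsym1_0010, hsym1_0100, hsym1_0101, hsym1_0110, hsym1_1000, hsym1_1001, hsym1_1010, hsym1_1011, hsym1_1100, hsym1_1101, hsym1_1110] at hr4
      try simp only [hsym0_10, hsym0_010, hsym0_100, hsym0_101, hsym0_110, hsym0_0010, hsym0_0100, hsym0_0101, hsym0_0110, hsym0_1000, hsym0_1001, hsym0_1010, hsym0_1011, hsym0_1100, hsym0_1101, hsym0_1110, hsym1_10, hsym1_010, hsym1_100, hsym1_101, hsym1_110, hsym1_0010, hsym1_0100, hsym1_0101, hsym1_0110, hsym1_1000, hsym1_1001, hsym1_1010, hsym1_1011, hsym1_1100, hsym1_1101, hsym1_1110] at hr5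
      try simp only [hsym0_10, hsym0_010, hsym0_100, hsym0_101, hsym0_110, hsym0_0010, hsym0_0100, hsym0_0101, hsym0_0110, hsym0_1000, hsym0_1001, hsym0_1010, hsym0_1011, hsym0_1100, hsym0_1101, hsym0_1110, hsym1_10, hsym1_010, hsym1_100, hsym1_101, hsym1_110, hsym1_0010, hsym1_0100, hsym1_0101, hsym1_0110, hsym1_1000, hsym1_1001, hsym1_1010, hsym1_1011, hsym1_1100, hsym1_1101, hsym1_1110] at hr6
      try simp only [hsym0_10, hsym0_010, hsym0_100, hsym0_101, hsym0_110, hsym0_0010, hsym0_0100, hsym0_0101, hsym0_0110, hsym0_1000, hsym0_1001, hsym0_1010, hsym0_1011, hsym0_1100, hsym0_1101, hsym0_1110, hsym1_10, hsym1_010, hsym1_100, hsym1_101, hsym1_110, hsym1_0010, hsym1_0100, hsym1_0101, hsym1_0110, hsym1_1000, hsym1_1001, hsym1_1010, hsym1_1011, hsym1_1100, hsym1_1101, hsym1_1110] at hdd00E0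
      try simp only [hsym0_10, hsym0_010, hsym0_100, hsym0_101, hsym0_110, hsym0_0010, hsym0_0100, hsym0_0101, hsym0_0110, hsym0_1000, hsym0_1001, hsym0_1010, hsym0_1011, hsym0_1100, hsym0_1101, hsym0_1110, hsym1_10, hsym1_010, hsym1_100, hsym1_101, hsym1_110, hsym1_0010, hsym1_0100, hsym1_0101, hsym1_0110, hsym1_1000, hsym1_1001, hsym1_1010, hsym1_1011, hsym1_1100, hsym1_1101, hsym1_1110] at hdd11E0
      try simp only [hsym0_10, hsym0_010, hsym0_100, hsym0_101, hsym0_110, hsym0_0010, hsym0_0100, hsym0_0101, hsym0_0110, hsym0_1000, hsym0_1001, hsym0_1010, hsym0_1011, hsym0_1100, hsym0_1101, hsym0_1110, hsym1_10, hsym1_010, hsym1_100, hsym1_101, hsym1_110, hsym1_0010, hsym1_0100, hsym1_0101, hsym1_0110, hsym1_1000, hsym1_1001, hsym1_1010, hsym1_1011, hsym1_1100, hsym1_1101, hsym1_1110] at hdd00E1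
      try simp only [hsym0_10, hsym0_010, hsym0_100, hsym0_101, hsym0_110, hsym0_0010, hsym0_0100, hsym0_0101, hsym0_0110, hsym0_1000, hsym0_1001, hsym0_1010, hsym0_1011, hsym0_1100, hsym0_1101, hsym0_1110, hsym1_10, hsym1_010, hsym1_100, hsym1_101, hsym1_110, hsym1_0010, hsym1_0100, hsym1_0101, hsym1_0110, hsym1_1000, hsym1_1001, hsym1_1010, hsym1_1011, hsym1_1100, hsym1_1101, hsym1_1110] at hdd11E1
      linear_combination (2 * c - 1) * hr2 + 4 * c * x 0 * hr5 - 2 * c * x 0 * hr4 + c * (x 0) ^ 2 * hdd00E1 + c * (x 0) ^ 2 * hdd11E1 - 2 * pd 0 (pd 1 (fun y => u y 0)) x * hcc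
  · intro z hz i
    obtain ⟨p0, hp0, hγdef⟩ := hγ
    have hzS : z ∈ Ω ∩ {x : E2 | x 0 = 0} := by
      rw [hγdef] at hz; exact connectedComponentIn_subset _ _ hz
    have hz0 : z 0 = 0 := hzS.2
    fin_cases i
    · show Dt z 0 = 0
      rw [hDt0 z, hbc z hz 0, hz0]; ring
    · show Dt z 1 = 0
      rw [hDt1 z, hbc z hz 1, hz0]; ring
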